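/- arXiv:2305.11593 — 2 statements merged into one kernel-verified Lean document; each statement's English description precedes it below -/
import Mathlib

section
/- Let (m_k)_{k≥1} be a strictly increasing sequence of positive integers, m_0 = 0, and let x^k ∈ R((I − P_{m_{k−1}}) Q_{m_k}) for each k. Then 2‖Σ_{i=1}^k x^i‖_J² ≥ Σ_{i=1}^k ‖x^i‖_J² for every k. -/
open Filter Topology

/-- Composition `φ_n^m = φ_{m-1} ∘ ⋯ ∘ φ_n : X n →L X m` (junk value for `m < n`). -/
noncomputable def phiTo {X : ℕ → Type*} [∀ n, NormedAddCommGroup (X n)]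
    [∀ n, NormedSpace ℝ (X n)] (φ : ∀ n, X n →L[ℝ] X (n + 1)) (n : ℕ) :
    (m : ℕ) → X n →L[ℝ] X m
  | 0 => 0
  | m + 1 =>
    if h : m + 1 = n then by rw [h]; exact ContinuousLinearMap.id ℝ (X n)
    else (φ m).comp (phiTo φ n m)

open Classical in
/-- `σ(x,S)²`: the sum over consecutive pairs `p < q` of `S` of `‖φ_p^q(x_p) - x_q‖²`. -/
noncomputable def sigma2 {X : ℕ → Type*} [∀ n, NormedAddCommGroup (X n)]
    [∀ n, NormedSpace ℝ (X n)] (φ : ∀ n, X n →L[ℝ] X (n + 1))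
    (x : ∀ n, X n) (S : Finset ℕ) : ℝ :=
  ∑ p ∈ S, ∑ q ∈ S,
    if p < q ∧ ∀ r ∈ S, ¬(p < r ∧ r < q) then ‖phiTo φ p q (x p) - x q‖ ^ 2 else 0

noncomputable def sigmaJ {X : ℕ → Type*} [∀ n, NormedAddCommGroup (X n)]
    [∀ n, NormedSpace ℝ (X n)] (φ : ∀ n, X n →L[ℝ] X (n + 1))
    (x : ∀ n, X n) (S : Finset ℕ) : ℝ :=
  Real.sqrt (sigma2 φ x S)

/-- `ρ(x,S)² = σ(x,S)² + ‖x_{max S}‖²`. -/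
noncomputable def rho2 {X : ℕ → Type*} [∀ n, NormedAddCommGroup (X n)]
    [∀ n, NormedSpace ℝ (X n)] (φ : ∀ n, X n →L[ℝ] X (n + 1))
    (x : ∀ n, X n) (S : Finset ℕ) (hS : S.Nonempty) : ℝ :=
  sigma2 φ x S + ‖x (S.max' hS)‖ ^ 2

noncomputable def rhoJ {X : ℕ → Type*} [∀ n, NormedAddCommGroup (X n)]
    [∀ n, NormedSpace ℝ (X n)] (φ : ∀ n, X n →L[ℝ] X (n + 1))
    (x : ∀ n, X n) (S : Finset ℕ) (hS : S.Nonempty) : ℝ :=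
  Real.sqrt (rho2 φ x S hS)

/-- The set of values `ρ(x,S)` over finite nonempty `S ⊆ ℕ`. -/
def rhoSet {X : ℕ → Type*} [∀ n, NormedAddCommGroup (X n)]
    [∀ n, NormedSpace ℝ (X n)] (φ : ∀ n, X n →L[ℝ] X (n + 1))
    (x : ∀ n, X n) : Set ℝ :=
  {r : ℝ | ∃ (S : Finset ℕ) (hS : S.Nonempty), r = rhoJ φ x S hS}

/-- Membership in `Ĵ(Φ)`: `sup_S ρ(x,S) < ∞`. -/
def memJhat {X : ℕ → Type*} [∀ n, NormedAddCommGroup (X n)]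
    [∀ n, NormedSpace ℝ (X n)] (φ : ∀ n, X n →L[ℝ] X (n + 1))
    (x : ∀ n, X n) : Prop :=
  BddAbove (rhoSet φ x)

/-- The norm `‖x‖_J = (1/√2) sup_S ρ(x,S)`. -/
noncomputable def normJ {X : ℕ → Type*} [∀ n, NormedAddCommGroup (X n)]
    [∀ n, NormedSpace ℝ (X n)] (φ : ∀ n, X n →L[ℝ] X (n + 1))
    (x : ∀ n, X n) : ℝ :=
  (Real.sqrt 2)⁻¹ * sSup (rhoSet φ x)

/-- Membership in `J(Φ)`: member of `Ĵ(Φ)` with `‖x_n‖ → 0`. -/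
def memJ {X : ℕ → Type*} [∀ n, NormedAddCommGroup (X n)]
    [∀ n, NormedSpace ℝ (X n)] (φ : ∀ n, X n →L[ℝ] X (n + 1))
    (x : ∀ n, X n) : Prop :=
  memJhat φ x ∧ Tendsto (fun n => ‖x n‖) atTop (𝓝 0)

open Classical in
/-- The coordinate restriction `P_I`. -/
noncomputable def restrictSeq {X : ℕ → Type*} [∀ n, NormedAddCommGroup (X n)]
    (I : Set ℕ) (x : ∀ n, X n) : ∀ n, X n :=
  fun n => if n ∈ I then x n else 0

/-- The stepping map `Q_α`. -/
noncomputable def stepSeq {X : ℕ → Type*} [∀ n, NormedAddCommGroup (X n)]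
    [∀ n, NormedSpace ℝ (X n)] (φ : ∀ n, X n →L[ℝ] X (n + 1))
    (α : ℕ → ℕ) (x : ∀ n, X n) : ∀ n, X n :=
  fun n => phiTo φ (α n) n (x (α n))

/-! ### Auxiliary machinery -/

section PhiToLemmas

variable {X : ℕ → Type*} [∀ n, NormedAddCommGroup (X n)] [∀ n, NormedSpace ℝ (X n)]
  (φ : ∀ n, X n →L[ℝ] X (n + 1))

omit [∀ n, NormedSpace ℝ (X n)] in
lemma sub_zero_elem [Subsingleton (X 0)] (v : X 0) : v = 0 := Subsingleton.elim _ _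

lemma phiTo_self_apply [Subsingleton (X 0)] (n : ℕ) (v : X n) : phiTo φ n n v = v := by
  cases n with
  | zero => exact Subsingleton.elim _ _
  | succ s =>
    show (phiTo φ (s+1) (s+1)) v = v
    rw [phiTo, dif_pos rfl]; rfl

lemma phiTo_succ_apply (n q : ℕ) (h : q + 1 ≠ n) (v : X n) :
    phiTo φ n (q+1) v = φ q (phiTo φ n q v) := by
  rw [phiTo, dif_neg h]; rfl

lemma phiTo_comp_apply [Subsingleton (X 0)] {p q : ℕ} (hpq : p ≤ q) (v : X p) :
    ∀ r, q ≤ r → phiTo φ q r (phiTo φ p q v) = phiTo φ p r v := by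
  intro r hr
  induction r with
  | zero => interval_cases q; rfl
  | succ s ih =>
    rcases eq_or_lt_of_le hr with h | h
    · rw [← h, phiTo_self_apply]
    · have hq : q ≤ s := Nat.lt_succ_iff.mp h
      have h1 : s + 1 ≠ q := by omega
      have h2 : s + 1 ≠ p := by omega
      rw [phiTo_succ_apply φ q s h1, phiTo_succ_apply φ p s h2, ih hq]

lemma norm_phiTo_apply_le [Subsingleton (X 0)] (hφ : ∀ n, ‖φ n‖ ≤ 1) (p : ℕ) (v : X p) :
    ∀ q, ‖phiTo φ p q v‖ ≤ ‖v‖ := by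
  intro q
  induction q with
  | zero => show ‖(0 : X p →L[ℝ] X 0) v‖ ≤ ‖v‖; simp
  | succ s ih =>
    by_cases h : s + 1 = p
    · subst h; rw [phiTo_self_apply]
    · rw [phiTo_succ_apply φ p s h]
      calc ‖φ s (phiTo φ p s v)‖ ≤ ‖φ s‖ * ‖phiTo φ p s v‖ := (φ s).le_opNorm _
        _ ≤ 1 * ‖v‖ := mul_le_mul (hφ s) ih (norm_nonneg _) zero_le_one
        _ = ‖v‖ := one_mul _

end PhiToLemmas

/-! ### predecessor and min machinery -/

open Classical in
noncomputable def predN (S : Finset ℕ) (q : ℕ) : ℕ :=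
  if h : (S.filter (· < q)).Nonempty then (S.filter (· < q)).max' h else 0

lemma predN_mem {S : Finset ℕ} {q : ℕ} (h : (S.filter (· < q)).Nonempty) :
    predN S q ∈ S ∧ predN S q < q := by
  rw [predN, dif_pos h]
  have := (S.filter (· < q)).max'_mem h
  simp only [Finset.mem_filter] at this
  exact ⟨this.1, this.2⟩

lemma le_predN {S : Finset ℕ} {q : ℕ} {r : ℕ} (hr : r ∈ S) (hrq : r < q) :
    r ≤ predN S q := by
  have h : (S.filter (· < q)).Nonempty := ⟨r, Finset.mem_filter.mpr ⟨hr, hrq⟩⟩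
  rw [predN, dif_pos h]
  apply Finset.le_max'
  exact Finset.mem_filter.mpr ⟨hr, hrq⟩

lemma predN_eq {S : Finset ℕ} {q p : ℕ} (hp : p ∈ S) (hpq : p < q)
    (hmax : ∀ r ∈ S, r < q → r ≤ p) : predN S q = p := by
  have h1 : p ≤ predN S q := le_predN hp hpq
  have hne : (S.filter (· < q)).Nonempty := ⟨p, Finset.mem_filter.mpr ⟨hp, hpq⟩⟩
  obtain ⟨hmem, hlt⟩ := predN_mem hne
  exact le_antisymm (hmax _ hmem hlt) h1

lemma cons_iff_predN {S : Finset ℕ} {q : ℕ} (hq : q ∈ S) {p : ℕ} (hp : p ∈ S) :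
    (p < q ∧ ∀ r ∈ S, ¬(p < r ∧ r < q)) ↔
      ((S.filter (· < q)).Nonempty ∧ p = predN S q) := by
  constructor
  · rintro ⟨hpq, hmid⟩
    have hne : (S.filter (· < q)).Nonempty := ⟨p, Finset.mem_filter.mpr ⟨hp, hpq⟩⟩
    refine ⟨hne, ?_⟩
    have h1 := le_predN hp hpq
    obtain ⟨hmem, hlt⟩ := predN_mem hne
    rcases eq_or_lt_of_le h1 with h | h
    · exact h
    · exact absurd ⟨h, hlt⟩ (hmid _ hmem)
  · rintro ⟨hne, rfl⟩
    obtain ⟨hmem, hlt⟩ := predN_mem hne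
    exact ⟨hlt, fun r hr ⟨h1, h2⟩ => absurd (le_predN hr h2) (not_le.mpr h1)⟩

noncomputable def minD (s : Finset ℕ) : ℕ := (s.min : WithTop ℕ).untopD 0

lemma minD_eq_min' {s : Finset ℕ} (h : s.Nonempty) : minD s = s.min' h := by
  rw [minD, ← Finset.coe_min' h]; rfl

lemma minD_mem {s : Finset ℕ} (h : s.Nonempty) : minD s ∈ s := by
  rw [minD_eq_min' h]; exact s.min'_mem h

lemma minD_le {s : Finset ℕ} {r : ℕ} (hr : r ∈ s) : minD s ≤ r := by
  rw [minD_eq_min' ⟨r, hr⟩]; exact s.min'_le r hr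

lemma minD_eq {s : Finset ℕ} {q : ℕ} (hq : q ∈ s) (h : ∀ r ∈ s, q ≤ r) : minD s = q :=
  le_antisymm (minD_le hq) (h _ (minD_mem ⟨q, hq⟩))

/-! ### rows decomposition of sigma2 -/

section Rows

variable {X : ℕ → Type*} [∀ n, NormedAddCommGroup (X n)] [∀ n, NormedSpace ℝ (X n)]
  (φ : ∀ n, X n →L[ℝ] X (n + 1))

noncomputable def rowTerm (x : ∀ n, X n) (S : Finset ℕ) (q : ℕ) : ℝ :=
  if (S.filter (· < q)).Nonempty then
    ‖phiTo φ (predN S q) q (x (predN S q)) - x q‖ ^ 2 else 0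

lemma rowTerm_nonneg (x : ∀ n, X n) (S : Finset ℕ) (q : ℕ) : 0 ≤ rowTerm φ x S q := by
  rw [rowTerm]; split <;> positivity

lemma sigma2_eq_rows (x : ∀ n, X n) (S : Finset ℕ) :
    sigma2 φ x S = ∑ q ∈ S, rowTerm φ x S q := by
  rw [sigma2, Finset.sum_comm]
  refine Finset.sum_congr rfl fun q hq => ?_
  by_cases hne : (S.filter (· < q)).Nonempty
  · rw [rowTerm, if_pos hne]
    obtain ⟨hmem, _⟩ := predN_mem hne
    refine Finset.sum_eq_single_of_mem _ hmem ?_ |>.trans ?_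
    · intro p hp hpne
      rw [if_neg]
      intro hc
      exact hpne ((cons_iff_predN hq hp).mp hc).2
    · rw [if_pos ((cons_iff_predN hq hmem).mpr ⟨hne, rfl⟩)]
  · rw [rowTerm, if_neg hne]
    refine Finset.sum_eq_zero fun p hp => ?_
    rw [if_neg]
    rintro ⟨h1, -⟩
    exact hne ⟨p, Finset.mem_filter.mpr ⟨hp, h1⟩⟩

lemma sigma2_nonneg (x : ∀ n, X n) (S : Finset ℕ) : 0 ≤ sigma2 φ x S := by
  rw [sigma2_eq_rows]
  exact Finset.sum_nonneg fun q _ => rowTerm_nonneg φ x S q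

lemma sigma2_singleton (x : ∀ n, X n) (n : ℕ) : sigma2 φ x {n} = 0 := by
  rw [sigma2_eq_rows, Finset.sum_singleton, rowTerm, if_neg]
  rintro ⟨r, hr⟩
  simp only [Finset.mem_filter, Finset.mem_singleton] at hr
  omega

/-! ### rho basics -/

lemma rho2_nonneg (x : ∀ n, X n) (S : Finset ℕ) (hS : S.Nonempty) :
    0 ≤ rho2 φ x S hS :=
  add_nonneg (sigma2_nonneg φ x S) (by positivity)

lemma rhoJ_nonneg (x : ∀ n, X n) (S : Finset ℕ) (hS : S.Nonempty) :
    0 ≤ rhoJ φ x S hS := Real.sqrt_nonneg _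

lemma rhoJ_sq (x : ∀ n, X n) (S : Finset ℕ) (hS : S.Nonempty) :
    rhoJ φ x S hS ^ 2 = rho2 φ x S hS :=
  Real.sq_sqrt (rho2_nonneg φ x S hS)

lemma rhoJ_mem (x : ∀ n, X n) (S : Finset ℕ) (hS : S.Nonempty) :
    rhoJ φ x S hS ∈ rhoSet φ x := ⟨S, hS, rfl⟩

lemma rhoSet_nonempty (x : ∀ n, X n) : (rhoSet φ x).Nonempty :=
  ⟨_, rhoJ_mem φ x {0} (Finset.singleton_nonempty 0)⟩

lemma memJhat_of_rho2_le {x : ∀ n, X n} {C : ℝ}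
    (h : ∀ S hS, rho2 φ x S hS ≤ C) : memJhat φ x := by
  refine ⟨Real.sqrt C, ?_⟩
  rintro r ⟨S, hS, rfl⟩
  exact Real.sqrt_le_sqrt (h S hS)

lemma sSup_rhoSet_nonneg {x : ∀ n, X n} (h : memJhat φ x) :
    0 ≤ sSup (rhoSet φ x) :=
  le_trans (rhoJ_nonneg φ x {0} (Finset.singleton_nonempty 0))
    (le_csSup h (rhoJ_mem φ x {0} (Finset.singleton_nonempty 0)))

lemma rho2_le_sSup_sq {x : ∀ n, X n} (h : memJhat φ x) (S : Finset ℕ) (hS : S.Nonempty) :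
    rho2 φ x S hS ≤ sSup (rhoSet φ x) ^ 2 := by
  rw [← rhoJ_sq]
  exact pow_le_pow_left₀ (rhoJ_nonneg φ x S hS) (le_csSup h (rhoJ_mem φ x S hS)) 2

lemma sSup_rhoSet_sq_le {x : ∀ n, X n} {C : ℝ} (hC : 0 ≤ C)
    (h : ∀ S hS, rho2 φ x S hS ≤ C) : sSup (rhoSet φ x) ^ 2 ≤ C := by
  have hmem : memJhat φ x := memJhat_of_rho2_le φ h
  have h1 : sSup (rhoSet φ x) ≤ Real.sqrt C := by
    apply csSup_le (rhoSet_nonempty φ x)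
    rintro r ⟨S, hS, rfl⟩
    exact Real.sqrt_le_sqrt (h S hS)
  calc sSup (rhoSet φ x) ^ 2 ≤ Real.sqrt C ^ 2 :=
        pow_le_pow_left₀ (sSup_rhoSet_nonneg φ hmem) h1 2
    _ = C := Real.sq_sqrt hC

/-! ### memJhat closed under addition -/

lemma sigma2_add_le (x y : ∀ n, X n) (S : Finset ℕ) :
    sigma2 φ (x + y) S ≤ 2 * sigma2 φ x S + 2 * sigma2 φ y S := by
  rw [sigma2, sigma2, sigma2, Finset.mul_sum, Finset.mul_sum, ← Finset.sum_add_distrib]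
  refine Finset.sum_le_sum fun p _ => ?_
  rw [Finset.mul_sum, Finset.mul_sum, ← Finset.sum_add_distrib]
  refine Finset.sum_le_sum fun q _ => ?_
  split_ifs with h
  · have hxy : phiTo φ p q ((x + y) p) - (x + y) q =
        (phiTo φ p q (x p) - x q) + (phiTo φ p q (y p) - y q) := by
      simp only [Pi.add_apply, map_add]
      abel
    rw [hxy]
    set A := phiTo φ p q (x p) - x q
    set B := phiTo φ p q (y p) - y q
    have h4 : ‖A + B‖ ^ 2 ≤ (‖A‖ + ‖B‖) ^ 2 :=
      pow_le_pow_left₀ (norm_nonneg _) (norm_add_le A B) 2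
    nlinarith [h4, sq_nonneg (‖A‖ - ‖B‖)]
  · simp

lemma memJhat_add {x y : ∀ n, X n} (hx : memJhat φ x) (hy : memJhat φ y) :
    memJhat φ (x + y) := by
  apply memJhat_of_rho2_le φ
    (C := 2 * sSup (rhoSet φ x) ^ 2 + 2 * sSup (rhoSet φ y) ^ 2)
  intro S hS
  have h1 : rho2 φ (x + y) S hS ≤ 2 * rho2 φ x S hS + 2 * rho2 φ y S hS := by
    rw [rho2, rho2, rho2]
    have h2 : ‖(x + y) (S.max' hS)‖ ^ 2 ≤
        2 * ‖x (S.max' hS)‖ ^ 2 + 2 * ‖y (S.max' hS)‖ ^ 2 := by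
      have := norm_add_le (x (S.max' hS)) (y (S.max' hS))
      have h3 : ‖(x + y) (S.max' hS)‖ = ‖x (S.max' hS) + y (S.max' hS)‖ := rfl
      rw [h3]
      have h4 : ‖x (S.max' hS) + y (S.max' hS)‖ ^ 2 ≤
          (‖x (S.max' hS)‖ + ‖y (S.max' hS)‖) ^ 2 :=
        pow_le_pow_left₀ (norm_nonneg _) (norm_add_le _ _) 2
      nlinarith [h4, sq_nonneg (‖x (S.max' hS)‖ - ‖y (S.max' hS)‖)]
    have := sigma2_add_le φ x y S
    linarith
  exact h1.trans (by
    have := rho2_le_sSup_sq φ hx S hS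
    have := rho2_le_sSup_sq φ hy S hS
    linarith)

lemma memJhat_zero : memJhat φ (0 : ∀ n, X n) := by
  apply memJhat_of_rho2_le φ (C := 0)
  intro S hS
  rw [rho2]
  have h1 : sigma2 φ (0 : ∀ n, X n) S = 0 := by
    rw [sigma2]
    refine Finset.sum_eq_zero fun p _ => Finset.sum_eq_zero fun q _ => ?_
    split_ifs <;> simp
  rw [h1]
  simp

lemma memJhat_sum {ι : Type*} (s : Finset ι) (f : ι → ∀ n, X n)
    (h : ∀ i ∈ s, memJhat φ (f i)) : memJhat φ (∑ i ∈ s, f i) :=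
  Finset.sum_induction f (memJhat φ) (fun _ _ ha hb => memJhat_add φ ha hb)
    (memJhat_zero φ) h

end Rows


/-! ### value lemmas for a single block element -/

section BlockVals

variable {X : ℕ → Type*} [∀ n, NormedAddCommGroup (X n)] [∀ n, NormedSpace ℝ (X n)]
  [Subsingleton (X 0)] (φ : ∀ n, X n →L[ℝ] X (n + 1))
  (a b : ℕ) (hab : a < b) (y w : ∀ n, X n)
  (hw : w = stepSeq φ (fun n => min n b) y -
    restrictSeq (Set.Icc 1 a) (stepSeq φ (fun n => min n b) y))

include hw

lemma w_zero_of_le {n : ℕ} (hn : n ≤ a) : w n = 0 := by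
  rcases Nat.eq_zero_or_pos n with h0 | h1
  · subst h0; exact Subsingleton.elim _ _
  · have : n ∈ Set.Icc 1 a := ⟨h1, hn⟩
    simp only [hw, Pi.sub_apply, restrictSeq, if_pos this, sub_self]

lemma w_apply_of_lt {n : ℕ} (hn : a < n) :
    w n = phiTo φ (min n b) n (y (min n b)) := by
  have : n ∉ Set.Icc 1 a := fun h => absurd h.2 (not_le.mpr hn)
  simp only [hw, Pi.sub_apply, restrictSeq, if_neg this, sub_zero, stepSeq]

lemma w_eq_y {n : ℕ} (h1 : a < n) (h2 : n ≤ b) : w n = y n := by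
  rw [w_apply_of_lt φ a b y w hw h1, min_eq_left h2, phiTo_self_apply]

include hab in
lemma w_high {n : ℕ} (h : b ≤ n) : w n = phiTo φ b n (y b) := by
  rw [w_apply_of_lt φ a b y w hw (lt_of_lt_of_le hab h), min_eq_right h]

include hab in
lemma w_coh {p q : ℕ} (hp : b ≤ p) (hpq : p ≤ q) : phiTo φ p q (w p) = w q := by
  rw [w_high φ a b hab y w hw hp, w_high φ a b hab y w hw (hp.trans hpq),
    phiTo_comp_apply φ hp _ q hpq]

lemma w_dlow {p q : ℕ} (hpq : p < q) (hq : q ≤ a) : phiTo φ p q (w p) - w q = 0 := by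
  rw [w_zero_of_le φ a b y w hw (le_of_lt (lt_of_lt_of_le hpq hq)),
    w_zero_of_le φ a b y w hw hq, map_zero, sub_zero]

include hab in
lemma norm_w_high_le (hφ : ∀ n, ‖φ n‖ ≤ 1) {n : ℕ} (h : b ≤ n) : ‖w n‖ ≤ ‖w b‖ := by
  rw [w_high φ a b hab y w hw h, w_high φ a b hab y w hw le_rfl, phiTo_self_apply]
  exact norm_phiTo_apply_le φ hφ b (y b) n

/-! ### Step B : upper bound for `rho2` of a block element -/

include hab in
lemma stepB_bound (hφ : ∀ n, ‖φ n‖ ≤ 1) (T : Finset ℕ) (hT : T.Nonempty) :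
    ∃ s₁ s₂ : Finset ℕ,
      (s₁ ⊆ Finset.Icc (a+1) b ∧ b ∈ s₁) ∧ (s₂ ⊆ Finset.Icc (a+1) b ∧ b ∈ s₂) ∧
      rho2 φ w T hT ≤ (sigma2 φ w s₁ + ‖w (minD s₁)‖ ^ 2) +
        (sigma2 φ w s₂ + ‖w (minD s₂)‖ ^ 2) := by
  classical
  set B := (T.filter (fun n => a < n)).filter (fun n => n ≤ b) with hBdef
  set S' := insert b B with hS'def
  have hBmem : ∀ {n}, n ∈ B ↔ n ∈ T ∧ a < n ∧ n ≤ b := by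
    intro n
    simp only [hBdef, Finset.mem_filter, and_assoc]
  have hS'mem : ∀ {n}, n ∈ S' ↔ n = b ∨ n ∈ B := by
    intro n; simp [hS'def]
  have hS'sub : S' ⊆ Finset.Icc (a+1) b := by
    intro n hn
    rcases hS'mem.mp hn with h | h
    · subst h; simp only [Finset.mem_Icc]; omega
    · obtain ⟨-, h1, h2⟩ := hBmem.mp h
      simp only [Finset.mem_Icc]; omega
  have hbS' : b ∈ S' := Finset.mem_insert_self _ _
  have hS'ne : S'.Nonempty := ⟨b, hbS'⟩
  -- Part 1 : `sigma2 φ w T ≤ sigma2 φ w S' + ‖w (minD S')‖^2`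
  have part1 : sigma2 φ w T ≤ sigma2 φ w S' + ‖w (minD S')‖ ^ 2 := by
    -- rows of T that are ≤ a vanish
    have hrow_low : ∀ q ∈ T, q ≤ a → rowTerm φ w T q = 0 := by
      intro q hq hqa
      rw [rowTerm]
      split_ifs with hne
      · obtain ⟨hpT, hplt⟩ := predN_mem hne
        rw [w_dlow φ a b y w hw hplt hqa, norm_zero]
        norm_num
      · rfl
    -- split the rows of T
    have hsplit : sigma2 φ w T =
        (∑ q ∈ B, rowTerm φ w T q) +
        ∑ q ∈ (T.filter (fun n => a < n)).filter (fun n => ¬ n ≤ b), rowTerm φ w T q := by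
      rw [sigma2_eq_rows]
      have h1 : ∑ q ∈ T, rowTerm φ w T q
          = ∑ q ∈ T.filter (fun n => a < n), rowTerm φ w T q := by
        rw [Finset.sum_filter]
        refine Finset.sum_congr rfl fun q hq => ?_
        split_ifs with h
        · rfl
        · exact hrow_low q hq (by omega)
      rw [h1, ← Finset.sum_filter_add_sum_filter_not (T.filter (fun n => a < n))
        (fun n => n ≤ b)]
    set H := (T.filter (fun n => a < n)).filter (fun n => ¬ n ≤ b) with hHdef
    have hHmem : ∀ {n}, n ∈ H ↔ n ∈ T ∧ b < n := by
      intro n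
      simp only [hHdef, Finset.mem_filter, not_le, and_assoc]
      constructor
      · rintro ⟨h1, h2, h3⟩; exact ⟨h1, h3⟩
      · rintro ⟨h1, h2⟩; exact ⟨h1, by omega, h2⟩
    -- block rows bound
    have hrow_block : ∀ q ∈ B, rowTerm φ w T q ≤
        rowTerm φ w S' q + (if q = minD S' then ‖w (minD S')‖ ^ 2 else 0) := by
      intro q hq
      obtain ⟨hqT, hqa, hqb⟩ := hBmem.mp hq
      have hite0 : (0:ℝ) ≤ if q = minD S' then ‖w (minD S')‖ ^ 2 else 0 := by
        split_ifs <;> positivity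
      by_cases hfT : (T.filter (· < q)).Nonempty
      · obtain ⟨hpT, hplt⟩ := predN_mem hfT
        rw [rowTerm, if_pos hfT]
        set p := predN T q with hpdef
        by_cases hpa : a < p
        · -- predecessor inside the block : terms agree
          have hpB : p ∈ B := hBmem.mpr ⟨hpT, hpa, by omega⟩
          have hpS' : p ∈ S' := hS'mem.mpr (Or.inr hpB)
          have hfS' : (S'.filter (· < q)).Nonempty :=
            ⟨p, Finset.mem_filter.mpr ⟨hpS', hplt⟩⟩
          have hpred : predN S' q = p := by
            apply predN_eq hpS' hplt
            intro r hr hrq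
            rcases hS'mem.mp hr with h | h
            · omega
            · exact le_predN (hBmem.mp h).1 hrq
          have hrT : rowTerm φ w S' q = ‖phiTo φ p q (w p) - w q‖ ^ 2 := by
            rw [rowTerm, if_pos hfS', hpred]
          rw [hrT] at *
          linarith
        · -- predecessor below the block : this is the min-row
          push_neg at hpa
          have hq_min : minD S' = q := by
            apply minD_eq (hS'mem.mpr (Or.inr hq))
            intro r hr
            by_contra hcon
            push_neg at hcon
            rcases hS'mem.mp hr with h | h
            · omega
            · obtain ⟨hrT, hra, hrb⟩ := hBmem.mp h
              have := le_predN hrT hcon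
              omega
          rw [if_pos hq_min.symm, w_zero_of_le φ a b y w hw hpa, map_zero, zero_sub,
            norm_neg, hq_min]
          linarith [rowTerm_nonneg φ w S' q]
      · rw [rowTerm, if_neg hfT]
        linarith [rowTerm_nonneg φ w S' q]
    have hsum_block : (∑ q ∈ B, rowTerm φ w T q) ≤
        (∑ q ∈ B, rowTerm φ w S' q) +
          (if B.Nonempty then ‖w (minD S')‖ ^ 2 else 0) := by
      calc (∑ q ∈ B, rowTerm φ w T q)
          ≤ ∑ q ∈ B, (rowTerm φ w S' q + (if q = minD S' then ‖w (minD S')‖ ^ 2 else 0)) :=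
            Finset.sum_le_sum hrow_block
        _ = (∑ q ∈ B, rowTerm φ w S' q) +
            ∑ q ∈ B, (if q = minD S' then ‖w (minD S')‖ ^ 2 else 0) :=
            Finset.sum_add_distrib
        _ ≤ _ := by
            gcongr
            rw [Finset.sum_ite_eq' B (minD S') (fun _ => ‖w (minD S')‖ ^ 2)]
            split_ifs with h1 h2 h2
            · exact le_refl _
            · exact absurd ⟨_, h1⟩ h2
            · positivity
            · exact le_refl _
    by_cases hbT : b ∈ T
    · -- `b ∈ T` : the high rows vanish, `S' = B`
      have hBeqS' : S' = B := by
        rw [hS'def]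
        exact Finset.insert_eq_self.mpr (hBmem.mpr ⟨hbT, hab, le_rfl⟩)
      have hH0 : ∀ q ∈ H, rowTerm φ w T q = 0 := by
        intro q hq
        obtain ⟨hqT, hbq⟩ := hHmem.mp hq
        have hfT : (T.filter (· < q)).Nonempty :=
          ⟨b, Finset.mem_filter.mpr ⟨hbT, hbq⟩⟩
        rw [rowTerm, if_pos hfT]
        obtain ⟨hpT, hplt⟩ := predN_mem hfT
        rw [w_coh φ a b hab y w hw (le_predN hbT hbq) (le_of_lt hplt), sub_self,
          norm_zero]
        norm_num
      rw [hsplit, Finset.sum_eq_zero hH0, add_zero]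
      refine hsum_block.trans ?_
      have : sigma2 φ w S' = ∑ q ∈ B, rowTerm φ w S' q := by
        rw [sigma2_eq_rows, hBeqS']
      rw [this]
      gcongr
      split_ifs
      · exact le_refl _
      · positivity
    · -- `b ∉ T`
      have hbB : b ∉ B := fun h => hbT (hBmem.mp h).1
      have hsig : sigma2 φ w S' = rowTerm φ w S' b + ∑ q ∈ B, rowTerm φ w S' q := by
        rw [sigma2_eq_rows, hS'def, Finset.sum_insert hbB]
      have hsum_high : (∑ q ∈ H, rowTerm φ w T q) ≤
          rowTerm φ w S' b + (if B.Nonempty then 0 else ‖w (minD S')‖ ^ 2) := by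
        have hite0 : (0:ℝ) ≤ if B.Nonempty then 0 else ‖w (minD S')‖ ^ 2 := by
          split_ifs <;> positivity
        rcases H.eq_empty_or_nonempty with hHe | hHne
        · rw [hHe, Finset.sum_empty]
          linarith [rowTerm_nonneg φ w S' b]
        · set q0 := minD H with hq0def
          have hq0H : q0 ∈ H := minD_mem hHne
          obtain ⟨hq0T, hbq0⟩ := hHmem.mp hq0H
          have hsum1 : (∑ q ∈ H, rowTerm φ w T q) = rowTerm φ w T q0 := by
            apply Finset.sum_eq_single_of_mem q0 hq0H
            intro q hq hne
            obtain ⟨hqT, hbq⟩ := hHmem.mp hq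
            have hq0lt : q0 < q := lt_of_le_of_ne (minD_le hq) (Ne.symm hne)
            have hfT : (T.filter (· < q)).Nonempty :=
              ⟨q0, Finset.mem_filter.mpr ⟨hq0T, hq0lt⟩⟩
            rw [rowTerm, if_pos hfT]
            obtain ⟨hpT, hplt⟩ := predN_mem hfT
            rw [w_coh φ a b hab y w hw
              (le_trans (le_of_lt hbq0) (le_predN hq0T hq0lt)) (le_of_lt hplt),
              sub_self, norm_zero]
            norm_num
          rw [hsum1]
          by_cases hfT0 : (T.filter (· < q0)).Nonempty
          · obtain ⟨hpT, hplt⟩ := predN_mem hfT0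
            rw [rowTerm, if_pos hfT0]
            set p := predN T q0 with hpdef
            have hpb : p ≠ b := fun h => hbT (h ▸ hpT)
            have hplb : p < b := by
              rcases lt_or_ge p b with h | h
              · exact h
              · exfalso
                have hbp : b < p := lt_of_le_of_ne h (Ne.symm hpb)
                have hpH : p ∈ H := hHmem.mpr ⟨hpT, hbp⟩
                have := minD_le hpH
                omega
            by_cases hpa : a < p
            · have hpB : p ∈ B := hBmem.mpr ⟨hpT, hpa, le_of_lt hplb⟩
              have hpS' : p ∈ S' := hS'mem.mpr (Or.inr hpB)
              have hfS'b : (S'.filter (· < b)).Nonempty :=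
                ⟨p, Finset.mem_filter.mpr ⟨hpS', hplb⟩⟩
              have hpredb : predN S' b = p := by
                apply predN_eq hpS' hplb
                intro r hr hrb
                rcases hS'mem.mp hr with h | h
                · omega
                · exact le_predN (hBmem.mp h).1 (lt_trans hrb hbq0)
              have hrow_b : rowTerm φ w S' b = ‖phiTo φ p b (w p) - w b‖ ^ 2 := by
                rw [rowTerm, if_pos hfS'b, hpredb]
              have hcmp : ‖phiTo φ p q0 (w p) - w q0‖ ≤ ‖phiTo φ p b (w p) - w b‖ := by
                have h1 : w q0 = phiTo φ b q0 (w b) :=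
                  (w_coh φ a b hab y w hw le_rfl (le_of_lt hbq0)).symm
                have h2 : phiTo φ p q0 (w p) = phiTo φ b q0 (phiTo φ p b (w p)) :=
                  (phiTo_comp_apply φ (le_of_lt hplb) (w p) q0 (le_of_lt hbq0)).symm
                rw [h1, h2, ← map_sub]
                exact norm_phiTo_apply_le φ hφ b _ q0
              have hsq := pow_le_pow_left₀ (norm_nonneg _) hcmp 2
              rw [hrow_b]
              linarith
            · push_neg at hpa
              have hBe : B = ∅ := by
                rw [Finset.eq_empty_iff_forall_notMem]
                intro r hr
                obtain ⟨hrT, hra, hrb⟩ := hBmem.mp hr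
                have hrneb : r ≠ b := fun h => hbT (h ▸ hrT)
                have hrq0 : r < q0 := by omega
                have := le_predN hrT hrq0
                omega
              have hminb : minD S' = b := by
                rw [hS'def, hBe]
                exact minD_eq (Finset.mem_insert_self _ _)
                  (fun r hr => by
                    simp only [Finset.mem_insert, Finset.notMem_empty, or_false] at hr
                    omega)
              rw [w_zero_of_le φ a b y w hw hpa, map_zero, zero_sub, norm_neg,
                if_neg (by rw [hBe]; exact Finset.not_nonempty_empty), hminb]
              have h3 : ‖w q0‖ ≤ ‖w b‖ :=
                norm_w_high_le φ a b hab y w hw hφ (le_of_lt hbq0)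
              have hsq := pow_le_pow_left₀ (norm_nonneg _) h3 2
              linarith [rowTerm_nonneg φ w S' b]
          · rw [rowTerm, if_neg hfT0]
            linarith [rowTerm_nonneg φ w S' b]
      rw [hsplit]
      have hite : (if B.Nonempty then ‖w (minD S')‖ ^ 2 else 0) +
          (if B.Nonempty then 0 else ‖w (minD S')‖ ^ 2) = ‖w (minD S')‖ ^ 2 := by
        split_ifs <;> ring
      have := add_le_add hsum_block hsum_high
      rw [hsig]
      linarith [hite]
  -- Part 2 : bound the max term
  set M := T.max' hT with hMdef
  have part2 : ∃ s₂ : Finset ℕ, (s₂ ⊆ Finset.Icc (a+1) b ∧ b ∈ s₂) ∧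
      ‖w M‖ ^ 2 ≤ sigma2 φ w s₂ + ‖w (minD s₂)‖ ^ 2 := by
    have hbIcc : b ∈ Finset.Icc (a+1) b := by simp only [Finset.mem_Icc]; omega
    have hminsb : minD ({b} : Finset ℕ) = b :=
      minD_eq (Finset.mem_singleton_self b)
        (fun r hr => by rw [Finset.mem_singleton] at hr; omega)
    by_cases hMa : M ≤ a
    · refine ⟨{b}, ⟨Finset.singleton_subset_iff.mpr hbIcc, Finset.mem_singleton_self b⟩, ?_⟩
      rw [w_zero_of_le φ a b y w hw hMa, norm_zero]
      have h1 := sigma2_nonneg φ w ({b} : Finset ℕ)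
      nlinarith [sq_nonneg ‖w (minD ({b} : Finset ℕ))‖]
    · push_neg at hMa
      by_cases hMb : M ≤ b
      · refine ⟨insert M {b}, ⟨?_, ?_⟩, ?_⟩
        · intro r hr
          simp only [Finset.mem_insert, Finset.mem_singleton] at hr
          rcases hr with h | h <;> subst h <;> simp only [Finset.mem_Icc] <;> omega
        · simp
        · have hmins : minD (insert M ({b} : Finset ℕ)) = M := by
            apply minD_eq (Finset.mem_insert_self _ _)
            intro r hr
            simp only [Finset.mem_insert, Finset.mem_singleton] at hr
            rcases hr with h | h <;> omega
          rw [hmins]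
          linarith [sigma2_nonneg φ w (insert M ({b} : Finset ℕ))]
      · push_neg at hMb
        refine ⟨{b}, ⟨Finset.singleton_subset_iff.mpr hbIcc, Finset.mem_singleton_self b⟩, ?_⟩
        rw [hminsb]
        have h3 : ‖w M‖ ≤ ‖w b‖ :=
          norm_w_high_le φ a b hab y w hw hφ (le_of_lt hMb)
        have hsq := pow_le_pow_left₀ (norm_nonneg _) h3 2
        linarith [sigma2_nonneg φ w {b}]
  obtain ⟨s₂, hs₂, hbd₂⟩ := part2
  refine ⟨S', s₂, ⟨hS'sub, hbS'⟩, hs₂, ?_⟩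
  rw [rho2, ← hMdef]
  linarith

end BlockVals

/-- if `(m_k)_{k ≥ 1}` is strictly increasing with `m_0 = 0` and
`x^k ∈ R((I - P_{m_{k-1}}) Q_{m_k})`, then `2 ‖Σ_{i≤k} x^i‖_J² ≥ Σ_{i≤k} ‖x^i‖_J²`. -/
theorem stmt14 {X : ℕ → Type*} [∀ n, NormedAddCommGroup (X n)] [∀ n, NormedSpace ℝ (X n)]
    [∀ n, CompleteSpace (X n)] [Subsingleton (X 0)]
    (φ : ∀ n, X n →L[ℝ] X (n + 1)) (hφ : ∀ n, ‖φ n‖ ≤ 1)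
    (m : ℕ → ℕ) (hm0 : m 0 = 0) (hmono : StrictMono m)
    (x : ℕ → ∀ n, X n)
    (hx : ∀ k, 1 ≤ k → ∃ y : ∀ n, X n, memJhat φ y ∧
      x k = stepSeq φ (fun n => min n (m k)) y -
        restrictSeq (Set.Icc 1 (m (k - 1))) (stepSeq φ (fun n => min n (m k)) y)) :
    ∀ k, 1 ≤ k →
      2 * normJ φ (∑ i ∈ Finset.Icc 1 k, x i) ^ 2 ≥
        ∑ i ∈ Finset.Icc 1 k, normJ φ (x i) ^ 2 := by
  classical
  intro k hk
  -- extract the witnesses `y`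
  have hx' : ∀ j, ∃ yj : ∀ n, X n, 1 ≤ j →
      x j = stepSeq φ (fun n => min n (m j)) yj -
        restrictSeq (Set.Icc 1 (m (j - 1))) (stepSeq φ (fun n => min n (m j)) yj) := by
    intro j
    by_cases h : 1 ≤ j
    · obtain ⟨yj, -, h2⟩ := hx j h
      exact ⟨yj, fun _ => h2⟩
    · exact ⟨0, fun h' => absurd h' h⟩
  choose y hy using hx'
  have hab : ∀ j, 1 ≤ j → m (j - 1) < m j := fun j hj => hmono (by omega)
  set z := ∑ i ∈ Finset.Icc 1 k, x i with hzdef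
  -- the key difference computation
  have key : ∀ i, 1 ≤ i → i ≤ k → ∀ p q : ℕ, m (i-1) ≤ p → p < q → q ≤ m i →
      phiTo φ p q (z p) - z q = phiTo φ p q (x i p) - x i q := by
    intro i hi1 hik p q hp hpq hq
    have hzp : z p = ∑ j ∈ Finset.Icc 1 k, x j p := Finset.sum_apply p _ _
    have hzq : z q = ∑ j ∈ Finset.Icc 1 k, x j q := Finset.sum_apply q _ _
    calc phiTo φ p q (z p) - z q
        = ∑ j ∈ Finset.Icc 1 k, (phiTo φ p q (x j p) - x j q) := by
          rw [hzp, hzq, map_sum, Finset.sum_sub_distrib]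
      _ = phiTo φ p q (x i p) - x i q := by
          apply Finset.sum_eq_single_of_mem i (Finset.mem_Icc.mpr ⟨hi1, hik⟩)
          intro j hj hne
          rw [Finset.mem_Icc] at hj
          rcases lt_or_gt_of_ne hne with hlt | hgt
          · -- j < i : coherence
            have h1 : m j ≤ m (i-1) := hmono.monotone (by omega)
            rw [w_coh φ (m (j-1)) (m j) (hab j hj.1) (y j) (x j) (hy j hj.1)
              (le_trans h1 hp) (le_of_lt hpq), sub_self]
          · -- j > i : below the support
            have h1 : m i ≤ m (j-1) := hmono.monotone (by omega)
            exact w_dlow φ (m (j-1)) (m j) (y j) (x j) (hy j hj.1) hpq (le_trans hq h1)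
  -- choose optimal block sets
  have hopt : ∀ i, ∃ s : Finset ℕ, 1 ≤ i →
      ((s ⊆ Finset.Icc (m (i-1)+1) (m i) ∧ m i ∈ s) ∧
       ∀ t : Finset ℕ, t ⊆ Finset.Icc (m (i-1)+1) (m i) → m i ∈ t →
         sigma2 φ (x i) t + ‖x i (minD t)‖ ^ 2 ≤
           sigma2 φ (x i) s + ‖x i (minD s)‖ ^ 2) := by
    intro i
    by_cases hi : 1 ≤ i
    · have hne : (((Finset.Icc (m (i-1)+1) (m i)).powerset.filter
          (fun t => m i ∈ t))).Nonempty := by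
        refine ⟨{m i}, Finset.mem_filter.mpr ⟨Finset.mem_powerset.mpr ?_, ?_⟩⟩
        · rw [Finset.singleton_subset_iff, Finset.mem_Icc]
          have := hab i hi
          omega
        · exact Finset.mem_singleton_self _
      obtain ⟨s, hs, hmax⟩ := Finset.exists_max_image _
        (fun t => sigma2 φ (x i) t + ‖x i (minD t)‖ ^ 2) hne
      rw [Finset.mem_filter, Finset.mem_powerset] at hs
      refine ⟨s, fun _ => ⟨⟨hs.1, hs.2⟩, fun t hsub hmem => ?_⟩⟩
      exact hmax t (Finset.mem_filter.mpr ⟨Finset.mem_powerset.mpr hsub, hmem⟩)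
    · exact ⟨∅, fun h => absurd h hi⟩
  choose Sopt hSopt using hopt
  have hSsub : ∀ i, 1 ≤ i → Sopt i ⊆ Finset.Icc (m (i-1)+1) (m i) :=
    fun i hi => ((hSopt i hi).1).1
  have hSmem : ∀ i, 1 ≤ i → m i ∈ Sopt i := fun i hi => ((hSopt i hi).1).2
  have hqbounds : ∀ i, 1 ≤ i → ∀ q ∈ Sopt i, m (i-1) < q ∧ q ≤ m i := by
    intro i hi q hq
    have := hSsub i hi hq
    rw [Finset.mem_Icc] at this
    omega
  -- Step B and membership in Ĵ
  have hrho2le : ∀ i, 1 ≤ i → ∀ T hT, rho2 φ (x i) T hT ≤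
      2 * (sigma2 φ (x i) (Sopt i) + ‖x i (minD (Sopt i))‖ ^ 2) := by
    intro i hi T hT
    obtain ⟨s₁, s₂, ⟨hs₁sub, hs₁b⟩, ⟨hs₂sub, hs₂b⟩, hbd⟩ :=
      stepB_bound φ (m (i-1)) (m i) (hab i hi) (y i) (x i) (hy i hi) hφ T hT
    have h1 := (hSopt i hi).2 s₁ hs₁sub hs₁b
    have h2 := (hSopt i hi).2 s₂ hs₂sub hs₂b
    linarith
  have hximem : ∀ i, 1 ≤ i → memJhat φ (x i) :=
    fun i hi => memJhat_of_rho2_le φ (hrho2le i hi)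
  have hzmem : memJhat φ z := by
    rw [hzdef]
    exact memJhat_sum φ _ _ (fun i hi => hximem i (Finset.mem_Icc.mp hi).1)
  -- Step A : the concatenated set
  set Sf := insert 0 ((Finset.Icc 1 k).biUnion Sopt) with hSfdef
  have h0Sf : 0 ∈ Sf := Finset.mem_insert_self _ _
  have h0nb : 0 ∉ (Finset.Icc 1 k).biUnion Sopt := by
    intro h
    rw [Finset.mem_biUnion] at h
    obtain ⟨i, hi, h2⟩ := h
    rw [Finset.mem_Icc] at hi
    have := (hqbounds i hi.1 0 h2).1
    omega
  have hSfmem : ∀ {n}, n ∈ Sf ↔ n = 0 ∨ ∃ i, 1 ≤ i ∧ i ≤ k ∧ n ∈ Sopt i := by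
    intro n
    rw [hSfdef, Finset.mem_insert, Finset.mem_biUnion]
    constructor
    · rintro (h | ⟨i, hi, h2⟩)
      · exact Or.inl h
      · rw [Finset.mem_Icc] at hi
        exact Or.inr ⟨i, hi.1, hi.2, h2⟩
    · rintro (h | ⟨i, hi1, hi2, h2⟩)
      · exact Or.inl h
      · exact Or.inr ⟨i, Finset.mem_Icc.mpr ⟨hi1, hi2⟩, h2⟩
  have hdisj : (↑(Finset.Icc 1 k) : Set ℕ).PairwiseDisjoint Sopt := by
    intro i hi j hj hne
    simp only [Finset.coe_Icc, Set.mem_Icc] at hi hj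
    simp only [Function.onFun]
    rw [Finset.disjoint_left]
    intro n hni hnj
    obtain ⟨h1, h2⟩ := hqbounds i hi.1 n hni
    obtain ⟨h3, h4⟩ := hqbounds j hj.1 n hnj
    rcases lt_or_gt_of_ne hne with hlt | hgt
    · have : m i ≤ m (j-1) := hmono.monotone (by omega)
      omega
    · have : m j ≤ m (i-1) := hmono.monotone (by omega)
      omega
  have hmprev : ∀ i, 1 ≤ i → i ≤ k → m (i-1) ∈ Sf := by
    intro i hi1 hik
    rcases eq_or_lt_of_le hi1 with h | h
    · rw [← h]
      simpa [hm0] using h0Sf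
    · refine hSfmem.mpr (Or.inr ⟨i-1, by omega, by omega, ?_⟩)
      have := hSmem (i-1) (by omega)
      exact this
  have hbelow : ∀ i, 1 ≤ i → i ≤ k → ∀ q ∈ Sopt i, ∀ r ∈ Sf, r < q →
      r ≤ m (i-1) ∨ r ∈ Sopt i := by
    intro i hi1 hik q hq r hr hrq
    rcases hSfmem.mp hr with h | ⟨j, hj1, hjk, hjr⟩
    · left; omega
    · obtain ⟨hr1, hr2⟩ := hqbounds j hj1 r hjr
      obtain ⟨hq1, hq2⟩ := hqbounds i hi1 q hq
      rcases lt_trichotomy j i with hlt | heq | hgt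
      · left
        have : m j ≤ m (i-1) := hmono.monotone (by omega)
        omega
      · right; rw [← heq]; exact hjr
      · exfalso
        have : m i ≤ m (j-1) := hmono.monotone (by omega)
        omega
  have hSfne : Sf.Nonempty := ⟨0, h0Sf⟩
  -- per-block row computation
  have hperi : ∀ i ∈ Finset.Icc 1 k, (∑ q ∈ Sopt i, rowTerm φ z Sf q)
      = sigma2 φ (x i) (Sopt i) + ‖x i (minD (Sopt i))‖ ^ 2 := by
    intro i himem
    obtain ⟨hi1, hik⟩ := Finset.mem_Icc.mp himem
    have hSine : (Sopt i).Nonempty := ⟨m i, hSmem i hi1⟩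
    have hrow : ∀ q ∈ Sopt i, rowTerm φ z Sf q =
        rowTerm φ (x i) (Sopt i) q +
          (if ((Sopt i).filter (· < q)).Nonempty then 0
           else ‖x i (minD (Sopt i))‖ ^ 2) := by
      intro q hq
      obtain ⟨hq1, hq2⟩ := hqbounds i hi1 q hq
      have h0f : (Sf.filter (· < q)).Nonempty :=
        ⟨0, Finset.mem_filter.mpr ⟨h0Sf, by omega⟩⟩
      rw [rowTerm, if_pos h0f]
      by_cases hB : ((Sopt i).filter (· < q)).Nonempty
      · obtain ⟨hp'mem, hp'lt⟩ := predN_mem hB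
        have hp'Sf : predN (Sopt i) q ∈ Sf :=
          hSfmem.mpr (Or.inr ⟨i, hi1, hik, hp'mem⟩)
        have hp'bd := hqbounds i hi1 _ hp'mem
        have hpp' : predN Sf q = predN (Sopt i) q := by
          apply predN_eq hp'Sf hp'lt
          intro r hr hrq
          rcases hbelow i hi1 hik q hq r hr hrq with h | h
          · omega
          · exact le_predN h hrq
        rw [hpp', key i hi1 hik _ q (by omega) hp'lt hq2, rowTerm, if_pos hB,
          if_pos hB, add_zero]
      · have hpm : predN Sf q = m (i-1) := by
          apply predN_eq (hmprev i hi1 hik) hq1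
          intro r hr hrq
          rcases hbelow i hi1 hik q hq r hr hrq with h | h
          · exact h
          · exact absurd ⟨r, Finset.mem_filter.mpr ⟨h, hrq⟩⟩ hB
        have hqmin : minD (Sopt i) = q := by
          apply minD_eq hq
          intro r hr
          by_contra hcon
          push_neg at hcon
          exact hB ⟨r, Finset.mem_filter.mpr ⟨hr, hcon⟩⟩
        rw [hpm, key i hi1 hik _ q le_rfl hq1 hq2,
          w_zero_of_le φ (m (i-1)) (m i) (y i) (x i) (hy i hi1) le_rfl,
          map_zero, zero_sub, norm_neg, rowTerm, if_neg hB, if_neg hB, zero_add, hqmin]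
    rw [Finset.sum_congr rfl hrow, Finset.sum_add_distrib, ← sigma2_eq_rows]
    congr 1
    refine (Finset.sum_eq_single_of_mem (minD (Sopt i)) (minD_mem hSine) ?_).trans ?_
    · intro q hq hne
      rw [if_pos]
      exact ⟨minD (Sopt i), Finset.mem_filter.mpr
        ⟨minD_mem hSine, lt_of_le_of_ne (minD_le hq) (Ne.symm hne)⟩⟩
    · rw [if_neg]
      rintro ⟨r, hr⟩
      rw [Finset.mem_filter] at hr
      exact absurd (minD_le hr.1) (not_le.mpr hr.2)
  have stepA : sigma2 φ z Sf =
      ∑ i ∈ Finset.Icc 1 k, (sigma2 φ (x i) (Sopt i) + ‖x i (minD (Sopt i))‖ ^ 2) := by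
    rw [sigma2_eq_rows, hSfdef, Finset.sum_insert h0nb]
    have hrow0 : rowTerm φ z (insert 0 ((Finset.Icc 1 k).biUnion Sopt)) 0 = 0 := by
      rw [rowTerm, if_neg]
      rintro ⟨r, hr⟩
      rw [Finset.mem_filter] at hr
      omega
    rw [hrow0, zero_add, Finset.sum_biUnion hdisj]
    refine Finset.sum_congr rfl fun i hi => ?_
    rw [← hSfdef]
    exact hperi i hi
  -- final arithmetic
  have hA : (∑ i ∈ Finset.Icc 1 k,
      (sigma2 φ (x i) (Sopt i) + ‖x i (minD (Sopt i))‖ ^ 2)) ≤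
        sSup (rhoSet φ z) ^ 2 := by
    rw [← stepA]
    have h1 : sigma2 φ z Sf ≤ rho2 φ z Sf hSfne := by
      rw [rho2]
      have : (0:ℝ) ≤ ‖z (Sf.max' hSfne)‖ ^ 2 := by positivity
      linarith
    exact h1.trans (rho2_le_sSup_sq φ hzmem Sf hSfne)
  have hB2 : ∀ i ∈ Finset.Icc 1 k, sSup (rhoSet φ (x i)) ^ 2 ≤
      2 * (sigma2 φ (x i) (Sopt i) + ‖x i (minD (Sopt i))‖ ^ 2) := by
    intro i hi
    obtain ⟨hi1, -⟩ := Finset.mem_Icc.mp hi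
    apply sSup_rhoSet_sq_le φ ?_ (hrho2le i hi1)
    have := sigma2_nonneg φ (x i) (Sopt i)
    positivity
  have hsqrt2 : ((Real.sqrt 2)⁻¹ : ℝ) ^ 2 = 1/2 := by
    rw [inv_pow, Real.sq_sqrt (by norm_num : (2:ℝ) ≥ 0)]
    norm_num
  rw [ge_iff_le]
  calc ∑ i ∈ Finset.Icc 1 k, normJ φ (x i) ^ 2
      = ∑ i ∈ Finset.Icc 1 k, (1/2) * sSup (rhoSet φ (x i)) ^ 2 := by
        refine Finset.sum_congr rfl fun i _ => ?_
        rw [normJ, mul_pow, hsqrt2]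
    _ ≤ ∑ i ∈ Finset.Icc 1 k,
        (sigma2 φ (x i) (Sopt i) + ‖x i (minD (Sopt i))‖ ^ 2) := by
        refine Finset.sum_le_sum fun i hi => ?_
        have := hB2 i hi
        linarith
    _ ≤ sSup (rhoSet φ z) ^ 2 := hA
    _ = 2 * normJ φ z ^ 2 := by
        rw [normJ, mul_pow, hsqrt2]
        ring
end

section
/- If X and Y are subprojective Banach spaces, then the direct sum X ⊕ Y is subprojective. -/
/-- A Banach space is subprojective if every closed infinite-dimensional subspace
contains an infinite-dimensional closed subspace complemented in the whole space. -/
def Subprojective (Y : Type*) [NormedAddCommGroup Y] [NormedSpace ℝ Y] : Prop :=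
  ∀ M : Submodule ℝ Y, IsClosed (M : Set Y) → ¬FiniteDimensional ℝ M →
    ∃ N : Submodule ℝ Y, N ≤ M ∧ IsClosed (N : Set Y) ∧ ¬FiniteDimensional ℝ N ∧
      N.ClosedComplemented

/-- A linear map is strictly singular if it is an isomorphism (bounded below)
on no closed infinite-dimensional subspace. -/
def StrictlySingular {X Y : Type*} [NormedAddCommGroup X] [NormedSpace ℝ X]
    [NormedAddCommGroup Y] [NormedSpace ℝ Y] (T : X →ₗ[ℝ] Y) : Prop :=
  ∀ N : Submodule ℝ X, IsClosed (N : Set X) → ¬FiniteDimensional ℝ N →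
    ¬∃ c : ℝ, 0 < c ∧ ∀ x ∈ N, c * ‖x‖ ≤ ‖T x‖


section AuxSubproj

open Submodule Metric Finset

variable {E F : Type*} [NormedAddCommGroup E] [NormedSpace ℝ E]
  [NormedAddCommGroup F] [NormedSpace ℝ F]

lemma aux_findim_inf_ker (A : Submodule ℝ E) (hA : ¬FiniteDimensional ℝ A)
    (g : E →L[ℝ] ℝ) : ¬FiniteDimensional ℝ (A ⊓ LinearMap.ker (g : E →ₗ[ℝ] ℝ) : Submodule ℝ E) := by
  intro h
  by_cases hg : ∀ w ∈ A, g w = 0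
  · have : A ⊓ LinearMap.ker (g : E →ₗ[ℝ] ℝ) = A := inf_eq_left.mpr fun w hw => hg w hw
    rw [this] at h; exact hA h
  · push_neg at hg
    obtain ⟨w₀, hw₀A, hw₀⟩ := hg
    have hle : A ≤ (A ⊓ LinearMap.ker (g : E →ₗ[ℝ] ℝ)) ⊔ (ℝ ∙ w₀) := by
      intro w hw
      have : w = (w - (g w / g w₀) • w₀) + (g w / g w₀) • w₀ := by ring_nf; abel
      rw [this]
      apply Submodule.add_mem_sup
      · refine ⟨sub_mem hw (smul_mem _ _ hw₀A), ?_⟩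
        simp [LinearMap.mem_ker, div_mul_cancel₀, hw₀]
      · exact smul_mem _ _ (mem_span_singleton_self w₀)
    haveI : FiniteDimensional ℝ ((A ⊓ LinearMap.ker (g : E →ₗ[ℝ] ℝ)) ⊔ (ℝ ∙ w₀) : Submodule ℝ E) := by
      infer_instance
    exact hA (Submodule.finiteDimensional_of_le hle)

lemma aux_inf_ker_finset {ι : Type*} (W : Submodule ℝ E) (hWc : IsClosed (W : Set E))
    (hW : ¬FiniteDimensional ℝ W) (s : Finset ι) (g : ι → (E →L[ℝ] ℝ)) :
    IsClosed ((W ⊓ s.inf fun i => LinearMap.ker ((g i : E →ₗ[ℝ] ℝ)) : Submodule ℝ E) : Set E) ∧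
      ¬FiniteDimensional ℝ (W ⊓ s.inf fun i => LinearMap.ker ((g i : E →ₗ[ℝ] ℝ)) : Submodule ℝ E) := by
  classical
  induction s using Finset.cons_induction with
  | empty =>
    rw [Finset.inf_empty, inf_top_eq]
    exact ⟨hWc, hW⟩
  | cons a s ha ih =>
    rw [Finset.inf_cons]
    have heq : W ⊓ (LinearMap.ker ((g a : E →ₗ[ℝ] ℝ)) ⊓ s.inf fun i => LinearMap.ker ((g i : E →ₗ[ℝ] ℝ))) =
        (W ⊓ s.inf fun i => LinearMap.ker ((g i : E →ₗ[ℝ] ℝ))) ⊓ LinearMap.ker ((g a : E →ₗ[ℝ] ℝ)) := by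
      rw [inf_assoc]; ac_rfl
    rw [heq]
    refine ⟨?_, aux_findim_inf_ker _ ih.2 _⟩
    rw [Submodule.coe_inf]
    exact ih.1.inter (ContinuousLinearMap.isClosed_ker (g a))

lemma mazur (F : Submodule ℝ E) [FiniteDimensional ℝ F]
    (W : Submodule ℝ E) (hWc : IsClosed (W : Set E)) (hW : ¬FiniteDimensional ℝ W)
    {δ : ℝ} (hδ : 0 < δ) :
    ∃ W' : Submodule ℝ E, W' ≤ W ∧ IsClosed (W' : Set E) ∧ ¬FiniteDimensional ℝ W' ∧
      ∀ x ∈ W', ∀ f ∈ F, ∀ t : ℝ, (1 - δ) * ‖f‖ ≤ ‖f + t • x‖ := by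
  classical
  set S : Set E := Subtype.val '' (Metric.sphere (0 : F) 1) with hS
  have hScpt : IsCompact S := (isCompact_sphere (0 : F) 1).image continuous_subtype_val
  obtain ⟨t, hts, htfin, hcov⟩ := hScpt.finite_cover_balls hδ
  have hSnorm : ∀ y ∈ S, ‖y‖ = 1 ∧ y ∈ F := by
    rintro y ⟨⟨y', hy'F⟩, hy'', rfl⟩
    exact ⟨by simpa using hy'', hy'F⟩
  choose gfun hg1 hg2 using fun (y : E) (hy : y ≠ 0) => exists_dual_vector ℝ y (norm_ne_zero_iff.mpr hy)
  set g : E → (E →L[ℝ] ℝ) := fun y => if hy : y ≠ 0 then gfun y hy else 0 with hgdef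
  set tfin := htfin.toFinset with htf
  refine ⟨W ⊓ tfin.inf fun y => LinearMap.ker ((g y : E →ₗ[ℝ] ℝ)), inf_le_left, 
    (aux_inf_ker_finset W hWc hW tfin g).1, (aux_inf_ker_finset W hWc hW tfin g).2, ?_⟩
  intro x hx f hf tr
  rcases eq_or_ne f 0 with rfl | hfne
  · simpa using norm_nonneg _
  · have hfpos : (0:ℝ) < ‖f‖ := norm_pos_iff.mpr hfne
    set u := ‖f‖⁻¹ • f with hu
    have hunorm : ‖u‖ = 1 := by
      rw [hu, norm_smul, norm_inv, norm_norm, inv_mul_cancel₀ hfpos.ne']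
    have huS : u ∈ S := by
      refine ⟨⟨u, smul_mem F _ hf⟩, ?_, rfl⟩
      simpa [Metric.mem_sphere, dist_eq_norm] using hunorm
    obtain ⟨y, hyt, hyball⟩ : ∃ y ∈ t, u ∈ Metric.ball y δ := by
      have := hcov huS
      simpa using this
    have hyS : y ∈ S := hts hyt
    have hynorm : ‖y‖ = 1 := (hSnorm y hyS).1
    have hyne : y ≠ 0 := by intro h; rw [h] at hynorm; simp at hynorm
    have hgy : g y = gfun y hyne := by rw [hgdef]; simp [hyne]
    have hgy1 : ‖g y‖ = 1 := by rw [hgy]; exact hg1 y hyne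
    have hgyy : g y y = 1 := by rw [hgy, hg2 y hyne, hynorm]; norm_num
    have hxker : g y x = 0 := by
      have h1 : (tfin.inf fun y => LinearMap.ker ((g y : E →ₗ[ℝ] ℝ))) ≤ LinearMap.ker ((g y : E →ₗ[ℝ] ℝ)) :=
        Finset.inf_le (by simpa [htf] using hyt)
      exact h1 (hx.2)
    set s : ℝ := tr * ‖f‖⁻¹ with hs
    have key1 : (1:ℝ) ≤ ‖y + s • x‖ := by
      have : g y (y + s • x) = 1 := by
        rw [map_add, map_smul, hxker, hgyy]; simp
      calc (1:ℝ) = |g y (y + s • x)| := by rw [this]; norm_num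
        _ ≤ ‖g y‖ * ‖y + s • x‖ := (g y).le_opNorm _
        _ = ‖y + s • x‖ := by rw [hgy1, one_mul]
    have key2 : 1 - δ ≤ ‖u + s • x‖ := by
      have h1 : ‖u - y‖ < δ := mem_ball_iff_norm.mp hyball
      have h2 : ‖y + s • x‖ - ‖u - y‖ ≤ ‖u + s • x‖ := by
        have : ‖y + s • x‖ ≤ ‖u + s • x‖ + ‖u - y‖ := by
          calc ‖y + s • x‖ = ‖(u + s • x) - (u - y)‖ := by congr 1; abel
            _ ≤ ‖u + s • x‖ + ‖u - y‖ := norm_sub_le _ _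
        linarith
      linarith
    have hfinal : ‖f + tr • x‖ = ‖f‖ * ‖u + s • x‖ := by
      have : f + tr • x = ‖f‖ • (u + s • x) := by
        rw [smul_add, hu, smul_smul, mul_inv_cancel₀ hfpos.ne', one_smul, smul_smul, hs]
        congr 1
        rw [mul_comm tr _, ← mul_assoc, mul_inv_cancel₀ hfpos.ne', one_mul]
      rw [this, norm_smul, norm_norm]
    rw [hfinal, mul_comm]
    exact mul_le_mul_of_nonneg_left key2 hfpos.le

lemma exists_good_seq (T : E →L[ℝ] F) (M : Submodule ℝ E) (hMc : IsClosed (M : Set E))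
    (hMinf : ¬FiniteDimensional ℝ M)
    (hss : ∀ N : Submodule ℝ E, N ≤ M → IsClosed (N : Set E) → ¬FiniteDimensional ℝ N →
      ¬∃ c : ℝ, 0 < c ∧ ∀ x ∈ N, c * ‖x‖ ≤ ‖T x‖)
    (η : ℕ → ℝ) (hη : ∀ n, 0 < η n) (δ : ℕ → ℝ) (hδ : ∀ n, 0 < δ n) :
    ∃ x : ℕ → E, ∀ n : ℕ, ‖x n‖ = 1 ∧ x n ∈ M ∧ ‖T (x n)‖ ≤ η n ∧
      ∀ f ∈ span ℝ (x '' Set.Iio n), ∀ t : ℝ, (1 - δ n) * ‖f‖ ≤ ‖f + t • x n‖ := by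
  classical
  set Good : Submodule ℝ E → Prop :=
    fun W => W ≤ M ∧ IsClosed (W : Set E) ∧ ¬FiniteDimensional ℝ W with hGoodDef
  set Inv : (ℕ → E) × Submodule ℝ E × ℕ → Prop := fun p =>
    Good p.2.1 ∧
    (∀ i < p.2.2, ‖p.1 i‖ = 1 ∧ p.1 i ∈ M ∧ ‖T (p.1 i)‖ ≤ η i ∧
      ∀ f ∈ span ℝ (p.1 '' Set.Iio i), ∀ t : ℝ, (1 - δ i) * ‖f‖ ≤ ‖f + t • p.1 i‖) ∧
    (∀ w ∈ p.2.1, ∀ f ∈ span ℝ (p.1 '' Set.Iio p.2.2), ∀ t : ℝ,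
      (1 - δ p.2.2) * ‖f‖ ≤ ‖f + t • w‖) with hInvDef
  -- the step
  have hstep : ∀ p, Inv p → ∃ q, Inv q ∧ q.2.2 = p.2.2 + 1 ∧
      (∀ i < p.2.2, q.1 i = p.1 i) := by
    rintro ⟨v, W, n⟩ ⟨hGood, hprev, hmaz⟩
    dsimp only at hGood hprev hmaz
    obtain ⟨hWM, hWc, hWinf⟩ := hGood
    -- pick a unit vector with small T-norm
    have h1 := hss W hWM hWc hWinf
    push_neg at h1
    obtain ⟨x0, hx0W, hx0⟩ := h1 (η n) (hη n)
    have hx0ne : x0 ≠ 0 := by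
      rintro rfl
      simp at hx0
    have hx0pos : (0:ℝ) < ‖x0‖ := norm_pos_iff.mpr hx0ne
    set xn := ‖x0‖⁻¹ • x0 with hxn
    have hxnW : xn ∈ W := smul_mem _ _ hx0W
    have hxnnorm : ‖xn‖ = 1 := by
      rw [hxn, norm_smul, norm_inv, norm_norm, inv_mul_cancel₀ hx0pos.ne']
    have hxnT : ‖T xn‖ ≤ η n := by
      rw [hxn, map_smul, norm_smul, norm_inv, norm_norm]
      rw [inv_mul_le_iff₀ hx0pos]
      exact (le_of_lt (by rwa [mul_comm] at hx0))
    -- new function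
    set v' := Function.update v n xn with hv'
    have hvIio : ∀ i ≤ n, v' '' Set.Iio i = v '' Set.Iio i := by
      intro i hi
      apply Set.image_congr
      intro j hj
      have hj' := Set.mem_Iio.mp hj
      exact Function.update_of_ne (by omega : j ≠ n) _ _
    -- Mazur subspace for the new span
    have hfin : FiniteDimensional ℝ (span ℝ (v' '' Set.Iio (n+1))) :=
      FiniteDimensional.span_of_finite ℝ ((Set.finite_Iio _).image _)
    obtain ⟨W', hW'le, hW'c, hW'inf, hW'maz⟩ :=
      mazur (span ℝ (v' '' Set.Iio (n+1))) W hWc hWinf (hδ (n+1))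
    refine ⟨(v', W', n+1), ⟨⟨hW'le.trans hWM, hW'c, hW'inf⟩, ?_, ?_⟩, rfl, ?_⟩
    · -- per-index invariants
      intro i hi
      dsimp only at hi ⊢
      rcases Nat.lt_succ_iff_lt_or_eq.mp hi with hi' | rfl
      · have hvi : v' i = v i := Function.update_of_ne (by omega) _ _
        obtain ⟨h1, h2, h3, h4⟩ := hprev i hi'
        rw [hvIio i hi'.le, hvi]
        exact ⟨h1, h2, h3, h4⟩
      · have hvi : v' i = xn := Function.update_self _ _ _
        rw [hvIio i le_rfl, hvi]
        exact ⟨hxnnorm, hWM hxnW, hxnT, fun f hf t => hmaz xn hxnW f hf t⟩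
    · -- Mazur property of the new subspace
      intro w hw f hf t
      exact hW'maz w hw f hf t
    · intro i hi
      dsimp only at hi ⊢
      exact Function.update_of_ne (by omega) _ _
  -- initial state
  have hinit : Inv (fun _ => (0:E), M, 0) := by
    refine ⟨⟨le_rfl, hMc, hMinf⟩, fun i hi => absurd hi (Nat.not_lt_zero i), ?_⟩
    intro w hw f hf t
    dsimp only at hf
    rw [show Set.Iio (0:ℕ) = ∅ by ext j; simpa using Nat.not_lt_zero j, Set.image_empty, span_empty, mem_bot] at hf
    subst hf
    simp only [norm_zero, mul_zero, zero_add]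
    positivity
  -- build the chain
  choose next hnext using hstep
  set step : {p // Inv p} → {p // Inv p} :=
    fun s => ⟨next s.1 s.2, (hnext s.1 s.2).1⟩ with hstepdef
  set chain : ℕ → {p // Inv p} :=
    fun n => step^[n] ⟨(fun _ => (0:E), M, 0), hinit⟩ with hchaindef
  have hchain_succ : ∀ n, chain (n+1) = step (chain n) := fun n =>
    Function.iterate_succ_apply' _ _ _
  have hcounter : ∀ n, (chain n).1.2.2 = n := by
    intro n
    induction n with
    | zero => rfl
    | succ n ih =>
      rw [hchain_succ]
      show (next (chain n).1 (chain n).2).2.2 = n + 1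
      rw [(hnext (chain n).1 (chain n).2).2.1, ih]
  have hstable : ∀ n m, n < m → (chain m).1.1 n = (chain (n+1)).1.1 n := by
    intro n m hm
    induction m with
    | zero => omega
    | succ m ih =>
      rcases Nat.lt_succ_iff_lt_or_eq.mp hm with h | h
      · rw [hchain_succ]
        show (next (chain m).1 (chain m).2).1 n = _
        rw [(hnext (chain m).1 (chain m).2).2.2 n (by rw [hcounter]; exact h)]
        exact ih h
      · subst h; rfl
  refine ⟨fun n => (chain (n+1)).1.1 n, ?_⟩
  intro n
  obtain ⟨hG, hper, hmz⟩ := (chain (n+1)).2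
  have hn : n < (chain (n+1)).1.2.2 := by rw [hcounter]; omega
  obtain ⟨h1, h2, h3, h4⟩ := hper n hn
  have himg : (fun k => (chain (k+1)).1.1 k) '' Set.Iio n = (chain (n+1)).1.1 '' Set.Iio n := by
    apply Set.image_congr
    intro j hj
    have hj' := Set.mem_Iio.mp hj
    exact (hstable j (n+1) (by omega)).symm
  exact ⟨h1, h2, h3, by rw [himg]; exact h4⟩

lemma aux_prod_one_sub (s : Finset ℕ) (a : ℕ → ℝ) (h0 : ∀ i, 0 ≤ a i)
    (h1 : ∀ i, a i ≤ 1) : 1 - ∑ i ∈ s, a i ≤ ∏ i ∈ s, (1 - a i) := by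
  classical
  induction s using Finset.cons_induction with
  | empty => simp
  | cons j s hj ih =>
    rw [Finset.prod_cons, Finset.sum_cons]
    have h2 : (1 - a j) * (1 - ∑ i ∈ s, a i) ≤ (1 - a j) * ∏ i ∈ s, (1 - a i) :=
      mul_le_mul_of_nonneg_left ih (by linarith [h1 j])
    have h3 : 0 ≤ ∑ i ∈ s, a i := Finset.sum_nonneg fun i _ => h0 i
    nlinarith [h0 j]


lemma kato (T : E →L[ℝ] F) (M : Submodule ℝ E) (hMc : IsClosed (M : Set E))
    (hMinf : ¬FiniteDimensional ℝ M)
    (hss : ∀ N : Submodule ℝ E, N ≤ M → IsClosed (N : Set E) → ¬FiniteDimensional ℝ N →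
      ¬∃ c : ℝ, 0 < c ∧ ∀ x ∈ N, c * ‖x‖ ≤ ‖T x‖)
    (ε : ℝ) (hε : 0 < ε) :
    ∃ N : Submodule ℝ E, N ≤ M ∧ IsClosed (N : Set E) ∧ ¬FiniteDimensional ℝ N ∧
      ∀ y ∈ N, ‖T y‖ ≤ ε * ‖y‖ := by
  classical
  set δ : ℕ → ℝ := fun n => (1/2 : ℝ) ^ (n + 2) with hδdef
  set η : ℕ → ℝ := fun n => ε * (1/2 : ℝ) ^ (n + 3) with hηdef
  have hδpos : ∀ n, 0 < δ n := fun n => by positivity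
  have hδle : ∀ n, δ n ≤ 1 := by
    intro n
    rw [hδdef]
    calc ((1:ℝ)/2) ^ (n+2) ≤ 1 ^ (n+2) := by gcongr; norm_num
      _ = 1 := one_pow _
  have hηpos : ∀ n, 0 < η n := fun n => by positivity
  obtain ⟨x, hx⟩ := exists_good_seq T M hMc hMinf hss η hηpos δ hδpos
  -- partial sums
  set S : (ℕ → ℝ) → ℕ → E := fun a m => ∑ i ∈ Finset.range m, a i • x i with hSdef
  have hSmem : ∀ a m, S a m ∈ span ℝ (x '' Set.Iio m) := by
    intro a m
    exact sum_mem fun i hi => smul_mem _ _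
      (subset_span ⟨i, Set.mem_Iio.mpr (Finset.mem_range.mp hi), rfl⟩)
  -- one-step estimate
  have hstep : ∀ a m, (1 - δ m) * ‖S a m‖ ≤ ‖S a (m + 1)‖ := by
    intro a m
    have h := (hx m).2.2.2 (S a m) (hSmem a m) (a m)
    have h2 : S a (m+1) = S a m + a m • x m := by
      rw [hSdef]; dsimp only; rw [Finset.sum_range_succ]
    rw [h2]; exact h
  -- telescoping
  have htel : ∀ a m k, (∏ i ∈ Finset.Ico m (m + k), (1 - δ i)) * ‖S a m‖ ≤ ‖S a (m + k)‖ := by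
    intro a m k
    induction k with
    | zero => simp
    | succ k ih =>
      rw [show m + (k+1) = (m+k) + 1 by omega,
        Finset.prod_Ico_succ_top (by omega : m ≤ m + k)]
      calc (∏ i ∈ Finset.Ico m (m+k), (1 - δ i)) * (1 - δ (m+k)) * ‖S a m‖
          = (1 - δ (m+k)) * ((∏ i ∈ Finset.Ico m (m+k), (1 - δ i)) * ‖S a m‖) := by ring
        _ ≤ (1 - δ (m+k)) * ‖S a (m+k)‖ :=
            mul_le_mul_of_nonneg_left ih (by linarith [hδle (m+k)])
        _ ≤ ‖S a ((m+k)+1)‖ := hstep a (m+k)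
  -- the product is at least 1/2
  have hprod : ∀ m k, (1/2 : ℝ) ≤ ∏ i ∈ Finset.Ico m (m + k), (1 - δ i) := by
    intro m k
    have hsum : ∑ i ∈ Finset.Ico m (m+k), δ i ≤ 1/2 := by
      have h1 : ∑ i ∈ Finset.Ico m (m+k), δ i ≤ ∑ i ∈ Finset.range (m+k), δ i :=
        Finset.sum_le_sum_of_subset_of_nonneg
          (by intro i hi; rw [Finset.mem_range]; exact (Finset.mem_Ico.mp hi).2)
          (fun i _ _ => (hδpos i).le)
      have h2 : ∑ i ∈ Finset.range (m+k), δ i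
          = (1/4 : ℝ) * ∑ i ∈ Finset.range (m+k), (1/2:ℝ)^i := by
        rw [Finset.mul_sum]
        refine Finset.sum_congr rfl fun i _ => ?_
        rw [hδdef]
        ring
      have h3 := sum_geometric_two_le (m+k)
      rw [h2] at h1
      linarith
    calc (1/2 : ℝ) ≤ 1 - ∑ i ∈ Finset.Ico m (m+k), δ i := by linarith
      _ ≤ _ := aux_prod_one_sub _ _ (fun i => (hδpos i).le) hδle
  -- partial sum domination
  have hdom : ∀ a m n, m ≤ n → ‖S a m‖ ≤ 2 * ‖S a n‖ := by
    intro a m n hmn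
    have := htel a m (n - m)
    rw [show m + (n - m) = n by omega] at this
    have h2 := hprod m (n - m)
    rw [show m + (n - m) = n by omega] at h2
    nlinarith [norm_nonneg (S a m), norm_nonneg (S a n)]
  -- coefficient bound
  have hcoef : ∀ a n m, m < n → |a m| ≤ 4 * ‖S a n‖ := by
    intro a n m hmn
    have h1 : |a m| = ‖a m • x m‖ := by
      rw [norm_smul, (hx m).1, mul_one, Real.norm_eq_abs]
    have h2 : a m • x m = S a (m+1) - S a m := by
      rw [hSdef]; dsimp only; rw [Finset.sum_range_succ]; abel
    have h3 : ‖S a (m+1) - S a m‖ ≤ ‖S a (m+1)‖ + ‖S a m‖ := norm_sub_le _ _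
    have h4 := hdom a (m+1) n (by omega)
    have h5 := hdom a m n (by omega)
    rw [h1, h2]
    linarith
  -- norm estimate on finite sums
  have hTbound : ∀ a n, ‖T (S a n)‖ ≤ ε * ‖S a n‖ := by
    intro a n
    have h1 : T (S a n) = ∑ i ∈ Finset.range n, a i • T (x i) := by
      rw [hSdef]; dsimp only; rw [map_sum]
      exact Finset.sum_congr rfl fun i _ => by rw [map_smul]
    have h2 : ‖T (S a n)‖ ≤ ∑ i ∈ Finset.range n, |a i| * ‖T (x i)‖ := by
      rw [h1]
      refine (norm_sum_le _ _).trans ?_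
      refine Finset.sum_le_sum fun i _ => ?_
      rw [norm_smul, Real.norm_eq_abs]
    have h3 : ∑ i ∈ Finset.range n, |a i| * ‖T (x i)‖
        ≤ ∑ i ∈ Finset.range n, (4 * ‖S a n‖) * η i := by
      refine Finset.sum_le_sum fun i hi => ?_
      have := hcoef a n i (Finset.mem_range.mp hi)
      have hTx := (hx i).2.2.1
      have h0 : (0:ℝ) ≤ |a i| := abs_nonneg _
      have h0' : (0:ℝ) ≤ ‖T (x i)‖ := norm_nonneg _
      calc |a i| * ‖T (x i)‖ ≤ (4 * ‖S a n‖) * ‖T (x i)‖ :=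
            mul_le_mul_of_nonneg_right this h0'
        _ ≤ (4 * ‖S a n‖) * η i := by
            refine mul_le_mul_of_nonneg_left hTx ?_
            have := norm_nonneg (S a n); linarith
    have h4 : ∑ i ∈ Finset.range n, (4 * ‖S a n‖) * η i
        = (4 * ‖S a n‖) * (ε/8) * ∑ i ∈ Finset.range n, (1/2:ℝ)^i := by
      rw [Finset.mul_sum]
      refine Finset.sum_congr rfl fun i _ => ?_
      simp only [hηdef]; ring
    have h5 := sum_geometric_two_le n
    have h6 : (0:ℝ) ≤ 4 * ‖S a n‖ * (ε/8) := by positivity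
    have h7 : 4 * ‖S a n‖ * (ε/8) * ∑ i ∈ Finset.range n, (1/2:ℝ)^i
        ≤ 4 * ‖S a n‖ * (ε/8) * 2 := mul_le_mul_of_nonneg_left h5 h6
    calc ‖T (S a n)‖ ≤ ∑ i ∈ Finset.range n, (4 * ‖S a n‖) * η i := h2.trans h3
      _ = 4 * ‖S a n‖ * (ε/8) * ∑ i ∈ Finset.range n, (1/2:ℝ)^i := h4
      _ ≤ 4 * ‖S a n‖ * (ε/8) * 2 := h7
      _ = ε * ‖S a n‖ := by ring
  -- every element of the span is a partial sum
  have hrep : ∀ y ∈ span ℝ (Set.range x), ∃ a n, y = S a n := by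
    intro y hy
    obtain ⟨c, hc⟩ := Finsupp.mem_span_range_iff_exists_finsupp.mp hy
    refine ⟨fun i => c i, (c.support.sup id) + 1, ?_⟩
    rw [← hc, hSdef]
    dsimp only
    rw [Finsupp.sum]
    refine Finset.sum_subset ?_ ?_
    · intro j hj
      rw [Finset.mem_range]
      exact Nat.lt_succ_of_le (Finset.le_sup (f := id) hj)
    · intro j _ hj
      rw [Finsupp.notMem_support_iff.mp hj, zero_smul]
  -- linear independence
  have hli : LinearIndependent ℝ x := by
    rw [linearIndependent_iff']
    intro s g hsum i his
    set n := (s.sup id) + 1 with hn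
    set a : ℕ → ℝ := fun j => if j ∈ s then g j else 0 with ha
    have hsub : s ⊆ Finset.range n := by
      intro j hj
      rw [Finset.mem_range, hn]
      exact Nat.lt_succ_of_le (Finset.le_sup (f := id) hj)
    have hSn : S a n = 0 := by
      rw [hSdef]
      dsimp only
      rw [← Finset.sum_subset hsub (fun j _ hj => by rw [ha]; simp [hj])]
      rw [← hsum]
      exact Finset.sum_congr rfl fun j hj => by rw [ha]; simp [hj]
    have := hcoef a n i (Finset.mem_range.mp (hsub his))
    rw [hSn, norm_zero, mul_zero] at this
    have hai : a i = 0 := abs_eq_zero.mp (le_antisymm this (abs_nonneg _))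
    simp only [ha, if_pos his] at hai
    exact hai
  -- assemble
  set N := (span ℝ (Set.range x)).topologicalClosure with hN
  have hspanM : span ℝ (Set.range x) ≤ M :=
    span_le.mpr (by rintro _ ⟨i, rfl⟩; exact (hx i).2.1)
  refine ⟨N, ?_, ?_, ?_, ?_⟩
  · exact topologicalClosure_minimal _ hspanM hMc
  · exact isClosed_topologicalClosure _
  · intro hfin
    have hmem : ∀ i, x i ∈ N := fun i =>
      (le_topologicalClosure _) (subset_span (Set.mem_range_self i))
    set x' : ℕ → N := fun i => ⟨x i, hmem i⟩ with hx'
    have hli' : LinearIndependent ℝ x' := by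
      apply LinearIndependent.of_comp N.subtype
      convert hli
      rfl
    have := hli'.lt_aleph0_of_finiteDimensional
    rw [Cardinal.mk_nat] at this
    exact lt_irrefl _ this
  · have hC : IsClosed {y : E | ‖T y‖ ≤ ε * ‖y‖} := by
      have : {y : E | ‖T y‖ ≤ ε * ‖y‖} = {y : E | ‖T y‖ - ε * ‖y‖ ≤ 0} := by
        ext y; simp [sub_nonpos]
      rw [this]
      exact isClosed_le ((T.continuous.norm).sub (continuous_const.mul continuous_norm)) continuous_const
    have hsubC : (span ℝ (Set.range x) : Set E) ⊆ {y : E | ‖T y‖ ≤ ε * ‖y‖} := by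
      intro y hy
      obtain ⟨a, n, rfl⟩ := hrep y hy
      exact hTbound a n
    intro y hyN
    have : (N : Set E) ⊆ {y : E | ‖T y‖ ≤ ε * ‖y‖} := by
      rw [hN, topologicalClosure_coe]
      exact closure_minimal hsubC hC
    exact this hyN

end AuxSubproj

lemma key {E Z : Type*} [NormedAddCommGroup E] [NormedSpace ℝ E] [CompleteSpace E]
    [NormedAddCommGroup Z] [NormedSpace ℝ Z]
    (R : E →L[ℝ] Z) (hZ : Subprojective Z)
    (N : Submodule ℝ E) (hNc : IsClosed (N : Set E)) (hNinf : ¬FiniteDimensional ℝ N)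
    (c : ℝ) (hc : 0 < c) (hlow : ∀ x ∈ N, c * ‖x‖ ≤ ‖R x‖) :
    ∃ M₁ : Submodule ℝ E, M₁ ≤ N ∧ IsClosed (M₁ : Set E) ∧ ¬FiniteDimensional ℝ M₁ ∧
      M₁.ClosedComplemented := by
  classical
  haveI : CompleteSpace N := hNc.completeSpace_coe
  set Z₀ : Submodule ℝ Z := N.map (R : E →ₗ[ℝ] Z) with hZ₀
  set f : N →L[ℝ] Z := R.comp N.subtypeL with hf
  have hfval : ∀ v : N, f v = R (v : E) := fun v => rfl
  have hbound : ∀ v : N, ‖v‖ ≤ c⁻¹ * ‖f v‖ := by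
    intro v
    have := hlow (v : E) v.2
    rw [le_inv_mul_iff₀ hc]
    simpa [hfval] using this
  have hanti : AntilipschitzWith (⟨c⁻¹, by positivity⟩ : NNReal) f :=
    ContinuousLinearMap.antilipschitz_of_bound f hbound
  have hrange : Set.range f = (Z₀ : Set Z) := by
    rw [hZ₀]
    ext z
    constructor
    · rintro ⟨v, rfl⟩; exact ⟨v, v.2, rfl⟩
    · rintro ⟨x, hx, rfl⟩; exact ⟨⟨x, hx⟩, rfl⟩
  have hZ₀c : IsClosed (Z₀ : Set Z) := by
    rw [← hrange]
    exact hanti.isClosed_range f.uniformContinuous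
  -- linear equivalence N ≃ Z₀
  have hmem : ∀ v : N, R (v : E) ∈ Z₀ := fun v => ⟨v, v.2, rfl⟩
  set φ₀ : N →ₗ[ℝ] Z₀ :=
    LinearMap.codRestrict Z₀ ((R : E →ₗ[ℝ] Z).comp N.subtype) hmem with hφ₀
  have hφval : ∀ v : N, (φ₀ v : Z) = R (v : E) := fun v => rfl
  have hRinj : ∀ u ∈ N, ∀ v ∈ N, R u = R v → u = v := by
    intro u hu v hv huv
    have h1 : R (u - v) = 0 := by rw [map_sub, sub_eq_zero]; exact huv
    have h2 := hlow (u - v) (sub_mem hu hv)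
    rw [h1, norm_zero] at h2
    have h3 : ‖u - v‖ ≤ 0 := le_of_mul_le_mul_left (by simpa using h2) hc
    exact sub_eq_zero.mp (norm_le_zero_iff.mp h3)
  have hinj : Function.Injective φ₀ := by
    intro u v huv
    have h0 : R ((u : E)) = R ((v : E)) := congrArg Subtype.val huv
    exact Subtype.ext (hRinj _ u.2 _ v.2 h0)
  have hsurj : Function.Surjective φ₀ := by
    rintro ⟨z, hz⟩
    obtain ⟨x, hx, rfl⟩ := hz
    exact ⟨⟨x, hx⟩, rfl⟩
  set e : N ≃ₗ[ℝ] Z₀ := LinearEquiv.ofBijective φ₀ ⟨hinj, hsurj⟩ with he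
  have hZ₀inf : ¬FiniteDimensional ℝ Z₀ := by
    intro h
    exact hNinf (LinearEquiv.finiteDimensional e.symm)
  obtain ⟨N', hN'le, hN'c, hN'inf, π, hπ⟩ := hZ Z₀ hZ₀c hZ₀inf
  -- the pullback subspace
  set M₁ : Submodule ℝ E := N ⊓ Submodule.comap (R : E →ₗ[ℝ] Z) N' with hM₁
  have hM₁le : M₁ ≤ N := inf_le_left
  have hM₁c : IsClosed (M₁ : Set E) := by
    rw [hM₁, Submodule.coe_inf]
    exact hNc.inter (hN'c.preimage R.continuous)
  -- the inverse map
  set ι : N' →ₗ[ℝ] Z₀ := Submodule.inclusion hN'le with hι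
  set ψ : N' →ₗ[ℝ] E := N.subtype ∘ₗ (e.symm : Z₀ →ₗ[ℝ] N) ∘ₗ ι with hψ
  have hψval : ∀ v : N', ψ v = ((e.symm (ι v) : N) : E) := fun v => rfl
  have hRψ : ∀ v : N', R (ψ v) = (v : Z) := by
    intro v
    have h1 : R (ψ v) = (φ₀ (e.symm (ι v)) : Z) := rfl
    have h2 : φ₀ (e.symm (ι v)) = e (e.symm (ι v)) := rfl
    rw [h1, h2, e.apply_symm_apply]
    rfl
  have hψmem : ∀ v : N', ψ v ∈ M₁ := by
    intro v
    refine ⟨(e.symm (ι v) : N).2, ?_⟩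
    show R (ψ v) ∈ N'
    rw [hRψ]
    exact v.2
  set ψ₀ : N' →ₗ[ℝ] M₁ := LinearMap.codRestrict M₁ ψ hψmem with hψ₀
  have hψ₀bound : ∀ v : N', ‖ψ₀ v‖ ≤ c⁻¹ * ‖v‖ := by
    intro v
    have h1 : ‖ψ₀ v‖ = ‖ψ v‖ := rfl
    have h2 : ψ v ∈ N := (e.symm (ι v) : N).2
    have h3 := hlow (ψ v) h2
    rw [hRψ v] at h3
    rw [h1, le_inv_mul_iff₀ hc]
    simpa using h3
  set P : N' →L[ℝ] M₁ := LinearMap.mkContinuous ψ₀ c⁻¹ hψ₀bound with hP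
  set proj : E →L[ℝ] M₁ := P.comp (π.comp R) with hproj
  have hfix : ∀ m : M₁, proj (m : E) = m := by
    intro m
    have hm2 : R (m : E) ∈ N' := m.2.2
    set v : N' := ⟨R (m : E), hm2⟩ with hv
    have h1 : π (R (m : E)) = v := hπ v
    have h2 : proj (m : E) = P v := by
      rw [hproj]
      simp only [ContinuousLinearMap.comp_apply]
      rw [h1]
    have h3 : ψ₀ v = m := by
      have h4 : e ⟨(m : E), m.2.1⟩ = ι v := by
        apply Subtype.ext
        rfl
      have h5 : e.symm (ι v) = ⟨(m : E), m.2.1⟩ := by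
        rw [← h4, e.symm_apply_apply]
      apply Subtype.ext
      show ψ v = (m : E)
      rw [hψval, h5]
    rw [h2]
    show ψ₀ v = m
    exact h3
  have hψ₀inj : Function.Injective ψ₀ := by
    intro u v huv
    have h0 : ψ u = ψ v := congrArg (fun z : M₁ => (z : E)) huv
    have h1 : R (ψ u) = R (ψ v) := congrArg R h0
    rw [hRψ, hRψ] at h1
    exact Subtype.ext h1
  have hψ₀surj : Function.Surjective ψ₀ := by
    intro m
    refine ⟨⟨R (m : E), m.2.2⟩, ?_⟩
    have := hfix m
    rw [hproj] at this
    simp only [ContinuousLinearMap.comp_apply] at this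
    rw [hπ ⟨R (m : E), m.2.2⟩] at this
    exact this
  have hM₁inf : ¬FiniteDimensional ℝ M₁ := by
    intro h
    exact hN'inf (LinearEquiv.finiteDimensional
      (LinearEquiv.ofBijective ψ₀ ⟨hψ₀inj, hψ₀surj⟩).symm)
  exact ⟨M₁, hM₁le, hM₁c, hM₁inf, ⟨proj, hfix⟩⟩

/-- the direct sum of two subprojective Banach spaces is subprojective. -/
theorem stmt16 {X Y : Type*} [NormedAddCommGroup X] [NormedSpace ℝ X] [CompleteSpace X]
    [NormedAddCommGroup Y] [NormedSpace ℝ Y] [CompleteSpace Y]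
    (hX : Subprojective X) (hY : Subprojective Y) :
    Subprojective (X × Y) := by
  intro M hMc hMinf
  set Q : (X × Y) →L[ℝ] Y := ContinuousLinearMap.snd ℝ X Y with hQ
  set P : (X × Y) →L[ℝ] X := ContinuousLinearMap.fst ℝ X Y with hPd
  by_cases hcase : ∃ N : Submodule ℝ (X × Y), N ≤ M ∧ IsClosed (N : Set (X × Y)) ∧
      ¬FiniteDimensional ℝ N ∧ ∃ c : ℝ, 0 < c ∧ ∀ x ∈ N, c * ‖x‖ ≤ ‖Q x‖
  · obtain ⟨N, hle, hc, hinf, c, hcpos, hlow⟩ := hcase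
    obtain ⟨M₁, h1, h2, h3, h4⟩ := key Q hY N hc hinf c hcpos hlow
    exact ⟨M₁, h1.trans hle, h2, h3, h4⟩
  · have hss : ∀ N : Submodule ℝ (X × Y), N ≤ M → IsClosed (N : Set (X × Y)) →
        ¬FiniteDimensional ℝ N → ¬∃ c : ℝ, 0 < c ∧ ∀ x ∈ N, c * ‖x‖ ≤ ‖Q x‖ :=
      fun N h1 h2 h3 hex => hcase ⟨N, h1, h2, h3, hex⟩
    obtain ⟨N, hNle, hNc, hNinf, hNsmall⟩ := kato Q M hMc hMinf hss (1/2) (by norm_num)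
    have hlow : ∀ x ∈ N, (1/2 : ℝ) * ‖x‖ ≤ ‖P x‖ := by
      intro x hxN
      have h1 : ‖x‖ ≤ ‖x.1‖ + ‖x.2‖ := by
        rw [Prod.norm_def]
        exact max_le (le_add_of_nonneg_right (norm_nonneg _))
          (le_add_of_nonneg_left (norm_nonneg _))
      have h2 := hNsmall x hxN
      have h3 : Q x = x.2 := rfl
      have h4 : P x = x.1 := rfl
      rw [h3] at h2
      rw [h4]
      linarith
    obtain ⟨M₁, h1, h2, h3, h4⟩ := key P hX N hNc hNinf (1/2) (by norm_num) hlow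
    exact ⟨M₁, h1.trans hNle, h2, h3, h4⟩
end
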